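/- For every n×n matrix A and every nonempty subset S of {1,...,n}, the cycle-sum satisfies C_S(A) = Σ_{partitions S_1⊔⋯⊔S_k = S} (-1)^{|S|-k} (k-1)! D_{S_1}(A)⋯D_{S_k}(A), where the sum is over all set-partitions of S into nonempty blocks. -/

import Mathlib

open scoped Classical

/-- The cycle-sum `C_S(A)`: sum over all cyclic orderings of `S` of the
corresponding cyclic products of entries of `A`. -/
noncomputable def cycleSum {n : ℕ} (A : Matrix (Fin n) (Fin n) ℂ) (S : Finset (Fin n)) : ℂ :=
  ∑ σ ∈ Finset.univ.filter
      (fun σ : Equiv.Perm (Fin n) =>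
        σ.IsCycleOn (S : Set (Fin n)) ∧ ∀ i ∉ S, σ i = i),
    ∏ i ∈ S, A i (σ i)

/-- The principal minor of `A` with row and column set `S`. -/
noncomputable def pminor {n : ℕ} (A : Matrix (Fin n) (Fin n) ℂ) (S : Finset (Fin n)) : ℂ :=
  (A.submatrix (fun i : S => (i : Fin n)) (fun i : S => (i : Fin n))).det

namespace Stmt9Aux

open Finset

variable {β : Type*} [DecidableEq β]

/-- Remove a part from a finpartition of a finset. -/
noncomputable def del {s : Finset β} (P : Finpartition s) (B : Finset β) (hB : B ∈ P.parts) :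
    Finpartition (s \ B) :=
  P.ofSubset (Finset.erase_subset _ _) (by
    ext x
    simp only [Finset.mem_sup, Finset.mem_erase, Finset.mem_sdiff, id_eq]
    constructor
    · rintro ⟨T, ⟨hTB, hT⟩, hx⟩
      refine ⟨P.le hT hx, fun hxB => hTB ?_⟩
      exact P.eq_of_mem_parts hT hB hx hxB
    · rintro ⟨hxs, hxB⟩
      obtain ⟨T, hT, hx⟩ := P.exists_mem hxs
      exact ⟨T, ⟨fun h => hxB (h ▸ hx), hT⟩, hx⟩)

@[simp] lemma del_parts {s : Finset β} (P : Finpartition s) (B : Finset β) (hB : B ∈ P.parts) :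
    (del P B hB).parts = P.parts.erase B := rfl

/-- Add a part to a finpartition of `s \ B`. -/
noncomputable def glue {s : Finset β} (B : Finset β) (hB : B.Nonempty) (hBs : B ⊆ s)
    (P : Finpartition (s \ B)) : Finpartition s :=
  P.extend (by simpa [Finset.bot_eq_empty, ← Finset.nonempty_iff_ne_empty] using hB)
    Finset.sdiff_disjoint (sdiff_sup_cancel hBs)

@[simp] lemma glue_parts {s : Finset β} (B : Finset β) (hB : B.Nonempty) (hBs : B ⊆ s)
    (P : Finpartition (s \ B)) : (glue B hB hBs P).parts = insert B P.parts := rfl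

lemma not_mem_parts {s B : Finset β} (hB : B.Nonempty) (P : Finpartition (s \ B)) :
    B ∉ P.parts := by
  intro h
  obtain ⟨x, hx⟩ := hB
  exact (Finset.mem_sdiff.1 (P.le h hx)).2 hx

lemma sigma_eq {s : Finset β} {B C : Finset β} (P : Finpartition (s \ B))
    (Q : Finpartition (s \ C)) (h : B = C) (hp : P.parts = Q.parts) :
    (⟨B, P⟩ : Σ X : Finset β, Finpartition (s \ X)) = ⟨C, Q⟩ := by
  subst h
  exact congrArg _ (Finpartition.ext hp)

/-- Decomposition of a sum over finpartitions of `s` according to the block containing `a`. -/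
lemma sum_decomp {s : Finset β} {a : β} (ha : a ∈ s) (f : Finset (Finset β) → ℂ) :
    ∑ P : Finpartition s, f P.parts
      = ∑ B ∈ s.powerset.filter (fun B => a ∈ B),
          ∑ P' : Finpartition (s \ B), f (insert B P'.parts) := by
  rw [← Finset.sum_sigma (s.powerset.filter (fun B => a ∈ B))
      (fun B => (Finset.univ : Finset (Finpartition (s \ B))))
      (fun x => f (insert x.1 x.2.parts))]
  refine Finset.sum_bij' (fun P _ => ⟨P.part a, del P (P.part a) (P.part_mem.2 ha)⟩)
    (fun x hx => glue x.1 ⟨a, ((Finset.mem_filter.1 (Finset.mem_sigma.1 hx).1).2)⟩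
      (Finset.mem_powerset.1 (Finset.mem_filter.1 (Finset.mem_sigma.1 hx).1).1) x.2)
    ?_ ?_ ?_ ?_ ?_
  · -- hi
    intro P _
    refine Finset.mem_sigma.2 ⟨Finset.mem_filter.2 ⟨Finset.mem_powerset.2 ?_, P.mem_part ha⟩,
      Finset.mem_univ _⟩
    exact P.le (P.part_mem.2 ha)
  · -- hj
    intro x hx
    exact Finset.mem_univ _
  · -- left_inv
    intro P _
    apply Finpartition.ext
    simp only [glue_parts, del_parts]
    exact Finset.insert_erase (P.part_mem.2 ha)
  · -- right_inv
    intro x hx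
    obtain ⟨B, P'⟩ := x
    have haB : a ∈ B := (Finset.mem_filter.1 (Finset.mem_sigma.1 hx).1).2
    have hBne : B.Nonempty := ⟨a, haB⟩
    set G := glue B hBne (Finset.mem_powerset.1 (Finset.mem_filter.1 (Finset.mem_sigma.1 hx).1).1) P' with hG
    have h1 : G.part a = B := by
      refine G.part_eq_of_mem ?_ haB
      simp [hG, glue_parts]
    refine sigma_eq _ _ h1 ?_
    simp only [del_parts, h1, glue_parts]
    exact Finset.erase_insert (not_mem_parts hBne P')
  · -- values
    intro P _
    simp only [del_parts]
    rw [Finset.insert_erase (P.part_mem.2 ha)]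

lemma sum_powerset_pow (u : Finset β) (x : ℂ) :
    ∑ C ∈ u.powerset, x ^ (u.card - C.card) = (x + 1) ^ u.card := by
  have h := Finset.prod_add (fun _ : β => (1 : ℂ)) (fun _ => x) u
  simp only [Finset.prod_const_one, one_mul, Finset.prod_const] at h
  rw [add_comm x 1, h]
  refine Finset.sum_congr rfl fun C hC => ?_
  rw [Finset.card_sdiff_of_subset (Finset.mem_powerset.1 hC)]

lemma sum_parts_asc_empty (j : ℕ) :
    ∑ P : Finpartition (∅ : Finset β), (-1 : ℂ) ^ P.parts.card * ((j+1).ascFactorial P.parts.card : ℂ)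
      = (-(j+1) : ℂ) ^ (∅ : Finset β).card := by
  have hP : ∀ P : Finpartition (∅ : Finset β), P.parts = ∅ := fun P =>
    Finpartition.parts_eq_empty_iff.2 rfl
  rw [Finset.sum_congr rfl (fun P _ => by rw [hP P])]
  have hcard : Fintype.card (Finpartition (∅ : Finset β)) = 1 := by
    rw [← Finset.bot_eq_empty]
    exact Fintype.card_unique
  simp [hcard]

/-- The sum over finpartitions, weighted by `(-1)^k (j+1)(j+2)⋯(j+k)`. -/
lemma sum_parts_asc : ∀ (N : ℕ) (s : Finset β), s.card ≤ N → ∀ j : ℕ,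
    ∑ P : Finpartition s, (-1 : ℂ) ^ P.parts.card * ((j+1).ascFactorial P.parts.card : ℂ)
      = (-(j+1) : ℂ) ^ s.card := by
  intro N
  induction N with
  | zero =>
    intro s hs j
    have hse : s = ∅ := Finset.card_eq_zero.1 (Nat.le_zero.1 hs)
    subst hse
    exact sum_parts_asc_empty j
  | succ N ih =>
    intro s hs j
    rcases Finset.eq_empty_or_nonempty s with rfl | ⟨a, ha⟩
    · exact sum_parts_asc_empty j
    rw [sum_decomp ha (fun ps => (-1 : ℂ) ^ ps.card * ((j+1).ascFactorial ps.card : ℂ))]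
    have hstep : ∀ B ∈ s.powerset.filter (fun B => a ∈ B),
        (∑ P' : Finpartition (s \ B),
          (-1 : ℂ) ^ (insert B P'.parts).card * ((j+1).ascFactorial (insert B P'.parts).card : ℂ))
        = (-(j+1) : ℂ) * (-(j+2) : ℂ) ^ (s.card - B.card) := by
      intro B hB
      have haB : a ∈ B := (Finset.mem_filter.1 hB).2
      have hBs : B ⊆ s := Finset.mem_powerset.1 (Finset.mem_filter.1 hB).1
      have hcard : (s \ B).card = s.card - B.card := Finset.card_sdiff_of_subset hBs
      have hsum : ∑ P' : Finpartition (s \ B),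
          (-1 : ℂ) ^ P'.parts.card * ((j+2).ascFactorial P'.parts.card : ℂ)
          = (-(j+2) : ℂ) ^ (s \ B).card := by
        have := ih (s \ B) (by
          have h1 : B.Nonempty := ⟨a, haB⟩
          have : (s \ B).card < s.card := by
            rw [hcard]
            have := Finset.card_pos.2 h1
            have hBle := Finset.card_le_card hBs
            omega
          omega) (j+1)
        convert this using 3
        push_cast; ring
      rw [← hcard, ← hsum, Finset.mul_sum]
      refine Finset.sum_congr rfl fun P' _ => ?_
      have hnm : B ∉ P'.parts := not_mem_parts ⟨a, haB⟩ P'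
      rw [Finset.card_insert_of_notMem hnm]
      have hasc : (j+1).ascFactorial (P'.parts.card + 1)
          = (j+1) * ((j+2).ascFactorial P'.parts.card) := by
        have h1 : (j+1).ascFactorial (P'.parts.card + 1)
            = ((j+1) + P'.parts.card) * (j+1).ascFactorial P'.parts.card :=
          Nat.ascFactorial_succ
        have h2 : (j+1) * ((j+1)+1).ascFactorial P'.parts.card
            = ((j+1) + P'.parts.card) * (j+1).ascFactorial P'.parts.card :=
          Nat.succ_ascFactorial (j+1) _
        rw [h1]; exact h2.symm
      rw [hasc]
      push_cast
      ring
    rw [Finset.sum_congr rfl hstep]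
    -- now reindex over subsets of s.erase a
    have hre : ∑ B ∈ s.powerset.filter (fun B => a ∈ B),
        (-(j+1) : ℂ) * (-(j+2) : ℂ) ^ (s.card - B.card)
        = ∑ C ∈ (s.erase a).powerset, (-(j+1) : ℂ) * (-(j+2) : ℂ) ^ ((s.erase a).card - C.card) := by
      refine Finset.sum_bij' (fun B _ => B.erase a) (fun C _ => insert a C) ?_ ?_ ?_ ?_ ?_
      · intro B hB
        refine Finset.mem_powerset.2 (fun x hx => ?_)
        have := Finset.mem_powerset.1 (Finset.mem_filter.1 hB).1
        exact Finset.mem_erase.2 ⟨(Finset.mem_erase.1 hx).1, this (Finset.mem_erase.1 hx).2⟩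
      · intro C hC
        refine Finset.mem_filter.2 ⟨Finset.mem_powerset.2 ?_, Finset.mem_insert_self _ _⟩
        intro x hx
        rcases Finset.mem_insert.1 hx with rfl | hx
        · exact ha
        · exact Finset.erase_subset _ _ (Finset.mem_powerset.1 hC hx)
      · intro B hB
        exact Finset.insert_erase (Finset.mem_filter.1 hB).2
      · intro C hC
        exact Finset.erase_insert (fun h => (Finset.mem_erase.1 (Finset.mem_powerset.1 hC h)).1 rfl)
      · intro B hB
        have haB : a ∈ B := (Finset.mem_filter.1 hB).2
        have hBs : B ⊆ s := Finset.mem_powerset.1 (Finset.mem_filter.1 hB).1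
        rw [Finset.card_erase_of_mem haB, Finset.card_erase_of_mem ha]
        have h1 : 1 ≤ B.card := Finset.card_pos.2 ⟨a, haB⟩
        have h2 : B.card ≤ s.card := Finset.card_le_card hBs
        congr 2
        omega
    rw [hre, ← Finset.mul_sum, sum_powerset_pow]
    have h1 : (-(↑j+2) : ℂ) + 1 = -(j+1) := by ring
    rw [h1, Finset.card_erase_of_mem ha]
    have h2 : 1 ≤ s.card := Finset.card_pos.2 ⟨a, ha⟩
    rw [← pow_succ']
    congr 1
    omega

open Equiv

variable {m : ℕ}

lemma fix_inv {σ : Perm (Fin m)} {S : Finset (Fin m)} (hfix : ∀ i ∉ S, σ i = i) :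
    ∀ i ∈ S, σ i ∈ S := by
  intro i hi
  by_contra hne
  have h1 : σ (σ i) = σ i := hfix _ hne
  have h2 : σ i = i := σ.injective h1
  rw [h2] at hne
  exact hne hi

lemma inv_image {σ : Perm (Fin m)} {B : Finset (Fin m)} (h : ∀ i ∈ B, σ i ∈ B) :
    B.image σ = B := by
  apply Finset.eq_of_subset_of_card_le
  · intro x hx; obtain ⟨i, hi, rfl⟩ := Finset.mem_image.1 hx; exact h i hi
  · rw [Finset.card_image_of_injective _ σ.injective]

lemma mem_of_inv_apply_mem {σ : Perm (Fin m)} {B : Finset (Fin m)} (h : ∀ i ∈ B, σ i ∈ B)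
    {i : Fin m} (hi : σ i ∈ B) : i ∈ B := by
  rw [← inv_image h] at hi
  obtain ⟨b, hb, hbe⟩ := Finset.mem_image.1 hi
  exact σ.injective hbe ▸ hb

lemma inv_pow {σ : Perm (Fin m)} {B : Finset (Fin m)} (h : ∀ i ∈ B, σ i ∈ B) (k : ℕ) :
    ∀ i ∈ B, (σ ^ k) i ∈ B := by
  induction k with
  | zero => simpa using fun i hi => hi
  | succ k ih =>
    intro i hi
    rw [pow_succ, Equiv.Perm.mul_apply]
    exact ih _ (h i hi)

lemma mem_of_sameCycle {σ : Perm (Fin m)} {B : Finset (Fin m)} (h : ∀ i ∈ B, σ i ∈ B)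
    {i j : Fin m} (hi : i ∈ B) (hc : σ.SameCycle i j) : j ∈ B := by
  obtain ⟨k, -, rfl⟩ := hc.exists_pow_eq'
  exact inv_pow h k i hi

/-- The orbit of `i` inside `S`. -/
noncomputable def orb (σ : Perm (Fin m)) (S : Finset (Fin m)) (i : Fin m) : Finset (Fin m) :=
  S.filter (σ.SameCycle i)

lemma orb_subset (σ : Perm (Fin m)) (S : Finset (Fin m)) (i : Fin m) : orb σ S i ⊆ S :=
  Finset.filter_subset _ _

lemma mem_orb_self {σ : Perm (Fin m)} {S : Finset (Fin m)} {i : Fin m} (hi : i ∈ S) :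
    i ∈ orb σ S i := Finset.mem_filter.2 ⟨hi, Equiv.Perm.SameCycle.refl _ _⟩

lemma sameCycle_of_mem_orb {σ : Perm (Fin m)} {S : Finset (Fin m)} {i j : Fin m}
    (hj : j ∈ orb σ S i) : σ.SameCycle i j := (Finset.mem_filter.1 hj).2

lemma orb_congr {σ : Perm (Fin m)} {S : Finset (Fin m)} {i j : Fin m}
    (hij : σ.SameCycle i j) : orb σ S i = orb σ S j := by
  ext x
  simp only [orb, Finset.mem_filter, and_congr_right_iff]
  exact fun _ => ⟨fun h => hij.symm.trans h, fun h => hij.trans h⟩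

lemma orb_inv {σ : Perm (Fin m)} {S : Finset (Fin m)} (hinv : ∀ i ∈ S, σ i ∈ S) (i : Fin m) :
    ∀ x ∈ orb σ S i, σ x ∈ orb σ S i := by
  intro x hx
  obtain ⟨hxS, hc⟩ := Finset.mem_filter.1 hx
  exact Finset.mem_filter.2 ⟨hinv x hxS, hc.apply_right⟩

lemma orb_subset_of_inv {σ : Perm (Fin m)} {S B : Finset (Fin m)}
    (hB : ∀ i ∈ B, σ i ∈ B) {i : Fin m} (hi : i ∈ B) : orb σ S i ⊆ B :=
  fun _ hj => mem_of_sameCycle hB hi (sameCycle_of_mem_orb hj)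

lemma sdiff_inv {σ : Perm (Fin m)} {S B : Finset (Fin m)} (hinv : ∀ i ∈ S, σ i ∈ S)
    (hB : ∀ i ∈ B, σ i ∈ B) : ∀ i ∈ S \ B, σ i ∈ S \ B := by
  intro i hi
  obtain ⟨hiS, hiB⟩ := Finset.mem_sdiff.1 hi
  exact Finset.mem_sdiff.2 ⟨hinv i hiS, fun h => hiB (mem_of_inv_apply_mem hB h)⟩

lemma orb_sdiff_eq {σ : Perm (Fin m)} {S B : Finset (Fin m)}
    (hB : ∀ i ∈ B, σ i ∈ B) {j : Fin m} (hj : j ∈ S \ B) :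
    orb σ (S \ B) j = orb σ S j := by
  ext x
  simp only [orb, Finset.mem_filter, Finset.mem_sdiff]
  refine ⟨fun ⟨⟨h1, _⟩, h2⟩ => ⟨h1, h2⟩, fun ⟨h1, h2⟩ => ⟨⟨h1, fun hxB => ?_⟩, h2⟩⟩
  exact (Finset.mem_sdiff.1 hj).2 (mem_of_sameCycle hB hxB h2.symm)

/-- The key combinatorial bijection: invariant sets containing `a` correspond to
sets of orbits other than the orbit of `a`. -/
lemma invsum {σ : Perm (Fin m)} {S : Finset (Fin m)} (hinv : ∀ i ∈ S, σ i ∈ S)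
    {a : Fin m} (ha : a ∈ S) (x : ℂ) :
    ∑ B ∈ S.powerset.filter (fun B => a ∈ B ∧ ∀ i ∈ B, σ i ∈ B),
        x ^ ((S \ B).image (orb σ (S \ B))).card
      = (x + 1) ^ ((S.image (orb σ S)).card - 1) := by
  have hOa : orb σ S a ∈ S.image (orb σ S) := Finset.mem_image_of_mem _ ha
  have hM : ((S.image (orb σ S)).erase (orb σ S a)).card = (S.image (orb σ S)).card - 1 :=
    Finset.card_erase_of_mem hOa
  rw [← hM, ← sum_powerset_pow ((S.image (orb σ S)).erase (orb σ S a)) x]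
  refine Finset.sum_bij' (fun B _ => (B.image (orb σ S)).erase (orb σ S a))
    (fun C _ => orb σ S a ∪ C.biUnion id) ?_ ?_ ?_ ?_ ?_
  · -- hi
    intro B hB
    have hBs : B ⊆ S := Finset.mem_powerset.1 (Finset.mem_filter.1 hB).1
    exact Finset.mem_powerset.2 (Finset.erase_subset_erase _ (Finset.image_subset_image hBs))
  · -- hj
    intro C hC
    have hC' := Finset.mem_powerset.1 hC
    refine Finset.mem_filter.2 ⟨Finset.mem_powerset.2 ?_, Finset.mem_union_left _ (mem_orb_self ha), ?_⟩
    · intro y hy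
      rcases Finset.mem_union.1 hy with hy | hy
      · exact orb_subset _ _ _ hy
      · obtain ⟨X, hX, hyX⟩ := Finset.mem_biUnion.1 hy
        obtain ⟨i0, -, rfl⟩ := Finset.mem_image.1 (Finset.mem_of_mem_erase (hC' hX))
        exact orb_subset _ _ _ hyX
    · intro y hy
      rcases Finset.mem_union.1 hy with hy | hy
      · exact Finset.mem_union_left _ (orb_inv hinv a y hy)
      · obtain ⟨X, hX, hyX⟩ := Finset.mem_biUnion.1 hy
        refine Finset.mem_union_right _ (Finset.mem_biUnion.2 ⟨X, hX, ?_⟩)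
        obtain ⟨i0, -, rfl⟩ := Finset.mem_image.1 (Finset.mem_of_mem_erase (hC' hX))
        exact orb_inv hinv i0 y hyX
  · -- left_inv
    intro B hB
    have hfil := Finset.mem_filter.1 hB
    have hBs : B ⊆ S := Finset.mem_powerset.1 hfil.1
    obtain ⟨haB, hBinv⟩ := hfil.2
    apply Finset.Subset.antisymm
    · intro y hy
      rcases Finset.mem_union.1 hy with hy | hy
      · exact orb_subset_of_inv hBinv haB hy
      · obtain ⟨X, hX, hyX⟩ := Finset.mem_biUnion.1 hy
        obtain ⟨b, hb, rfl⟩ := Finset.mem_image.1 (Finset.mem_of_mem_erase hX)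
        exact orb_subset_of_inv hBinv hb hyX
    · intro b hb
      by_cases hbOa : b ∈ orb σ S a
      · exact Finset.mem_union_left _ hbOa
      · refine Finset.mem_union_right _ (Finset.mem_biUnion.2 ⟨orb σ S b, ?_, mem_orb_self (hBs hb)⟩)
        refine Finset.mem_erase.2 ⟨fun h => hbOa (h ▸ mem_orb_self (hBs hb)), Finset.mem_image_of_mem _ hb⟩
  · -- right_inv
    intro C hC
    have hC' := Finset.mem_powerset.1 hC
    apply Finset.Subset.antisymm
    · intro X hX
      obtain ⟨hXne, hXim⟩ := Finset.mem_erase.1 hX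
      obtain ⟨y, hy, rfl⟩ := Finset.mem_image.1 hXim
      rcases Finset.mem_union.1 hy with hy | hy
      · exact absurd (orb_congr (sameCycle_of_mem_orb hy)).symm hXne
      · obtain ⟨Y, hY, hyY⟩ := Finset.mem_biUnion.1 hy
        obtain ⟨i0, -, rfl⟩ := Finset.mem_image.1 (Finset.mem_of_mem_erase (hC' hY))
        rwa [← orb_congr (sameCycle_of_mem_orb hyY)]
    · intro Y hY
      have hYmem := Finset.mem_of_mem_erase (hC' hY)
      obtain ⟨i0, hi0, rfl⟩ := Finset.mem_image.1 hYmem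
      refine Finset.mem_erase.2 ⟨(Finset.mem_erase.1 (hC' hY)).1, ?_⟩
      refine Finset.mem_image_of_mem _ (Finset.mem_union_right _ (Finset.mem_biUnion.2 ⟨_, hY, mem_orb_self hi0⟩))
  · -- weight
    intro B hB
    have hfil := Finset.mem_filter.1 hB
    have hBs : B ⊆ S := Finset.mem_powerset.1 hfil.1
    obtain ⟨haB, hBinv⟩ := hfil.2
    congr 1
    -- card equality
    have h1 : (S \ B).image (orb σ (S \ B)) = (S \ B).image (orb σ S) :=
      Finset.image_congr (fun j hj => orb_sdiff_eq hBinv hj)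
    have h2 : (S \ B).image (orb σ S)
        = ((S.image (orb σ S)).erase (orb σ S a)) \ ((B.image (orb σ S)).erase (orb σ S a)) := by
      apply Finset.Subset.antisymm
      · intro X hX
        obtain ⟨jj, hjj, rfl⟩ := Finset.mem_image.1 hX
        obtain ⟨hjS, hjB⟩ := Finset.mem_sdiff.1 hjj
        have hne : orb σ S jj ≠ orb σ S a := fun h =>
          hjB (orb_subset_of_inv hBinv haB (h ▸ mem_orb_self hjS))
        refine Finset.mem_sdiff.2 ⟨Finset.mem_erase.2 ⟨hne, Finset.mem_image_of_mem _ hjS⟩, ?_⟩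
        intro hmem
        obtain ⟨b, hb, hbe⟩ := Finset.mem_image.1 (Finset.mem_of_mem_erase hmem)
        have : jj ∈ B := mem_of_sameCycle hBinv hb (sameCycle_of_mem_orb (hbe ▸ mem_orb_self hjS))
        exact hjB this
      · intro X hX
        obtain ⟨hX1, hX2⟩ := Finset.mem_sdiff.1 hX
        obtain ⟨hne, hXim⟩ := Finset.mem_erase.1 hX1
        obtain ⟨i0, hi0, rfl⟩ := Finset.mem_image.1 hXim
        have hi0B : i0 ∉ B := fun h =>
          hX2 (Finset.mem_erase.2 ⟨hne, Finset.mem_image_of_mem _ h⟩)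
        exact Finset.mem_image_of_mem _ (Finset.mem_sdiff.2 ⟨hi0, hi0B⟩)
    rw [h1, h2, Finset.card_sdiff_of_subset]
    exact Finset.erase_subset_erase _ (Finset.image_subset_image hBs)

lemma keygen_empty (σ : Perm (Fin m)) (j : ℕ) :
    ∑ P : Finpartition (∅ : Finset (Fin m)),
        (if ∀ T ∈ P.parts, ∀ i ∈ T, σ i ∈ T then
          (-1 : ℂ) ^ P.parts.card * ((j+1).ascFactorial P.parts.card : ℂ) else 0)
      = (-(j+1) : ℂ) ^ ((∅ : Finset (Fin m)).image (orb σ ∅)).card := by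
  have hP : ∀ P : Finpartition (∅ : Finset (Fin m)), P.parts = ∅ := fun P =>
    Finpartition.parts_eq_empty_iff.2 rfl
  rw [Finset.sum_congr rfl (fun P _ => by rw [hP P])]
  have hcard : Fintype.card (Finpartition (∅ : Finset (Fin m))) = 1 := by
    rw [← Finset.bot_eq_empty]
    exact Fintype.card_unique
  simp [hcard]

lemma keygen : ∀ (N : ℕ) (S : Finset (Fin m)) (σ : Perm (Fin m)), S.card ≤ N →
    (∀ i ∈ S, σ i ∈ S) → ∀ j : ℕ,
    ∑ P : Finpartition S, (if ∀ T ∈ P.parts, ∀ i ∈ T, σ i ∈ T then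
        (-1 : ℂ) ^ P.parts.card * ((j+1).ascFactorial P.parts.card : ℂ) else 0)
      = (-(j+1) : ℂ) ^ (S.image (orb σ S)).card := by
  intro N
  induction N with
  | zero =>
    intro S σ hS hinv j
    have hse : S = ∅ := Finset.card_eq_zero.1 (Nat.le_zero.1 hS)
    subst hse
    exact keygen_empty σ j
  | succ N ih =>
    intro S σ hS hinv j
    rcases Finset.eq_empty_or_nonempty S with rfl | ⟨a, ha⟩
    · exact keygen_empty σ j
    have hdec := sum_decomp ha (fun ps => if ∀ T ∈ ps, ∀ i ∈ T, σ i ∈ T then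
        (-1 : ℂ) ^ ps.card * ((j+1).ascFactorial ps.card : ℂ) else 0)
    refine Eq.trans hdec ?_
    have hstep : ∀ B ∈ S.powerset.filter (fun B => a ∈ B),
        (∑ P' : Finpartition (S \ B),
          (if ∀ T ∈ insert B P'.parts, ∀ i ∈ T, σ i ∈ T then
            (-1 : ℂ) ^ (insert B P'.parts).card
              * ((j+1).ascFactorial (insert B P'.parts).card : ℂ) else 0))
        = (if ∀ i ∈ B, σ i ∈ B then
            (-(j+1) : ℂ) * (-(j+2) : ℂ) ^ (((S \ B)).image (orb σ (S \ B))).card else 0) := by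
      intro B hB
      have haB : a ∈ B := (Finset.mem_filter.1 hB).2
      have hBs : B ⊆ S := Finset.mem_powerset.1 (Finset.mem_filter.1 hB).1
      by_cases hBinv : ∀ i ∈ B, σ i ∈ B
      · rw [if_pos hBinv]
        have hIH : ∑ P' : Finpartition (S \ B),
            (if ∀ T ∈ P'.parts, ∀ i ∈ T, σ i ∈ T then
              (-1 : ℂ) ^ P'.parts.card * ((j+2).ascFactorial P'.parts.card : ℂ) else 0)
            = (-(j+2) : ℂ) ^ (((S \ B)).image (orb σ (S \ B))).card := by
          have hlt : (S \ B).card ≤ N := by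
            have h1 : (S \ B).card = S.card - B.card := Finset.card_sdiff_of_subset hBs
            have h2 : 1 ≤ B.card := Finset.card_pos.2 ⟨a, haB⟩
            have h3 : B.card ≤ S.card := Finset.card_le_card hBs
            omega
          have := ih (S \ B) σ hlt (sdiff_inv hinv hBinv) (j+1)
          convert this using 3
          push_cast; ring
        rw [← hIH, Finset.mul_sum]
        refine Finset.sum_congr rfl fun P' _ => ?_
        have hnm : B ∉ P'.parts := not_mem_parts ⟨a, haB⟩ P'
        have hcond : (∀ T ∈ insert B P'.parts, ∀ i ∈ T, σ i ∈ T)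
            ↔ ((∀ i ∈ B, σ i ∈ B) ∧ ∀ T ∈ P'.parts, ∀ i ∈ T, σ i ∈ T) :=
          Finset.forall_mem_insert _ _ _
        by_cases hc : ∀ T ∈ P'.parts, ∀ i ∈ T, σ i ∈ T
        · rw [if_pos (hcond.2 ⟨hBinv, hc⟩), if_pos hc,
            Finset.card_insert_of_notMem hnm]
          have hasc : (j+1).ascFactorial (P'.parts.card + 1)
              = (j+1) * ((j+2).ascFactorial P'.parts.card) := by
            have h1 : (j+1).ascFactorial (P'.parts.card + 1)
                = ((j+1) + P'.parts.card) * (j+1).ascFactorial P'.parts.card :=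
              Nat.ascFactorial_succ
            have h2 : (j+1) * ((j+1)+1).ascFactorial P'.parts.card
                = ((j+1) + P'.parts.card) * (j+1).ascFactorial P'.parts.card :=
              Nat.succ_ascFactorial (j+1) _
            rw [h1]; exact h2.symm
          rw [hasc]
          push_cast
          ring
        · rw [if_neg (fun h => hc (hcond.1 h).2), if_neg hc, mul_zero]
      · rw [if_neg hBinv]
        refine Finset.sum_eq_zero fun P' _ => ?_
        rw [if_neg]
        intro h
        exact hBinv (h B (Finset.mem_insert_self _ _))
    refine Eq.trans (Finset.sum_congr rfl hstep) ?_
    rw [← Finset.sum_filter, Finset.filter_filter]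
    rw [← Finset.mul_sum, invsum hinv ha (-(j+2) : ℂ)]
    have h1 : (-(↑j+2) : ℂ) + 1 = -(j+1) := by ring
    rw [h1]
    have h2 : 1 ≤ (S.image (orb σ S)).card :=
      Finset.card_pos.2 (Finset.Nonempty.image ⟨a, ha⟩ _)
    rw [← pow_succ']
    congr 1
    omega

lemma neg_one_pow_sub {a b : ℕ} (h : b ≤ a) : (-1 : ℂ) ^ (a - b) = (-1) ^ a * (-1) ^ b := by
  have h2 : (-1 : ℂ) ^ b * (-1) ^ b = 1 := by
    rw [← pow_add]
    exact Even.neg_one_pow ⟨b, rfl⟩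
  calc (-1 : ℂ) ^ (a - b) = (-1) ^ (a-b) * ((-1)^b * (-1)^b) := by rw [h2, mul_one]
    _ = ((-1)^(a-b) * (-1)^b) * (-1)^b := by ring
    _ = (-1)^a * (-1)^b := by rw [← pow_add, Nat.sub_add_cancel h]

lemma isCycleOn_iff_card {σ : Perm (Fin m)} {S : Finset (Fin m)} (hinv : ∀ i ∈ S, σ i ∈ S)
    (hS : S.Nonempty) :
    σ.IsCycleOn (S : Set (Fin m)) ↔ (S.image (orb σ S)).card = 1 := by
  constructor
  · intro hc
    obtain ⟨a, ha⟩ := hS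
    have himg : S.image (orb σ S) = {orb σ S a} := by
      have : ∀ i ∈ S, orb σ S i = orb σ S a := fun i hi =>
        (orb_congr (hc.2 (Finset.mem_coe.2 ha) (Finset.mem_coe.2 hi))).symm
      rw [Finset.image_congr (fun i hi => this i hi)]
      exact Finset.image_const ⟨a, ha⟩ _
    rw [himg, Finset.card_singleton]
  · intro h1
    obtain ⟨X, hX⟩ := Finset.card_eq_one.1 h1
    have horb : ∀ i ∈ S, orb σ S i = X := fun i hi =>
      Finset.mem_singleton.1 (hX ▸ Finset.mem_image_of_mem _ hi)
    constructor
    · refine ⟨fun x hx => hinv x (Finset.mem_coe.1 hx), σ.injective.injOn, ?_⟩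
      intro y hy
      have : (y : Fin m) ∈ S.image σ := by
        rw [inv_image hinv]; exact Finset.mem_coe.1 hy
      obtain ⟨x, hx, hxe⟩ := Finset.mem_image.1 this
      exact ⟨x, Finset.mem_coe.2 hx, hxe⟩
    · intro x hx y hy
      have hx' := Finset.mem_coe.1 hx
      have hy' := Finset.mem_coe.1 hy
      have : y ∈ orb σ S x := by
        rw [horb x hx', ← horb y hy']
        exact mem_orb_self hy'
      exact sameCycle_of_mem_orb this

lemma sign_of_isCycleOn {σ : Perm (Fin m)} {S : Finset (Fin m)} (hfix : ∀ i ∉ S, σ i = i)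
    (hS : S.Nonempty) (hc : σ.IsCycleOn (S : Set (Fin m))) :
    ((Equiv.Perm.sign σ : ℤ) : ℂ) = -(-1 : ℂ) ^ S.card := by
  rcases eq_or_ne S.card 1 with h1 | h1
  · obtain ⟨b, rfl⟩ := Finset.card_eq_one.1 h1
    have hb : σ b = b := by
      have := hc.1.mapsTo (show b ∈ (({b} : Finset (Fin m)) : Set (Fin m)) by simp)
      simpa using this
    have hone : σ = 1 := by
      apply Equiv.ext
      intro i
      simp only [Equiv.Perm.one_apply]
      by_cases hi : i = b
      · subst hi; exact hb
      · exact hfix i (by simp [hi])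
    rw [hone]
    simp
  · have hnt : (↑S : Set (Fin m)).Nontrivial := by
      have : 1 < S.card := lt_of_le_of_ne (Finset.card_pos.2 hS) (Ne.symm h1)
      obtain ⟨x, hx, y, hy, hxy⟩ := Finset.one_lt_card.1 this
      exact ⟨x, Finset.mem_coe.2 hx, y, Finset.mem_coe.2 hy, hxy⟩
    obtain ⟨x, hx, y, hy, hxy⟩ := id hnt
    have hcyc : σ.IsCycle := by
      refine ⟨x, hc.apply_ne hnt hx, fun z hz => ?_⟩
      have hzS : z ∈ (↑S : Set (Fin m)) := by
        by_contra hzn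
        exact hz (hfix z (fun h => hzn (Finset.mem_coe.2 h)))
      exact (hc.2 hx hzS)
    have hsupp : σ.support = S := by
      ext i
      rw [Equiv.Perm.mem_support]
      constructor
      · intro h
        by_contra hn
        exact h (hfix i hn)
      · intro h
        exact hc.apply_ne hnt (Finset.mem_coe.2 h)
    have := hcyc.sign
    rw [hsupp] at this
    rw [this]
    push_cast
    ring

lemma key {σ : Perm (Fin m)} {S : Finset (Fin m)} (hfix : ∀ i ∉ S, σ i = i) (hS : S.Nonempty) :
    ∑ P : Finpartition S, (if ∀ T ∈ P.parts, ∀ i ∈ T, σ i ∈ T then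
        (-1 : ℂ) ^ (S.card - P.parts.card) * ((P.parts.card - 1).factorial : ℂ) else 0)
      = if σ.IsCycleOn (S : Set (Fin m)) then ((Equiv.Perm.sign σ : ℤ) : ℂ) else 0 := by
  have hinv := fix_inv hfix
  obtain ⟨a, ha⟩ := hS
  have hdec := sum_decomp ha (fun ps => if ∀ T ∈ ps, ∀ i ∈ T, σ i ∈ T then
      (-1 : ℂ) ^ (S.card - ps.card) * ((ps.card - 1).factorial : ℂ) else 0)
  refine Eq.trans hdec ?_
  have hstep : ∀ B ∈ S.powerset.filter (fun B => a ∈ B),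
      (∑ P' : Finpartition (S \ B),
        (if ∀ T ∈ insert B P'.parts, ∀ i ∈ T, σ i ∈ T then
          (-1 : ℂ) ^ (S.card - (insert B P'.parts).card)
            * (((insert B P'.parts).card - 1).factorial : ℂ) else 0))
      = (if ∀ i ∈ B, σ i ∈ B then
          (-(-1 : ℂ) ^ S.card) * (-1 : ℂ) ^ (((S \ B)).image (orb σ (S \ B))).card else 0) := by
    intro B hB
    have haB : a ∈ B := (Finset.mem_filter.1 hB).2
    have hBs : B ⊆ S := Finset.mem_powerset.1 (Finset.mem_filter.1 hB).1
    by_cases hBinv : ∀ i ∈ B, σ i ∈ B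
    · rw [if_pos hBinv]
      have hIH : ∑ P' : Finpartition (S \ B),
          (if ∀ T ∈ P'.parts, ∀ i ∈ T, σ i ∈ T then
            (-1 : ℂ) ^ P'.parts.card * (P'.parts.card.factorial : ℂ) else 0)
          = (-1 : ℂ) ^ (((S \ B)).image (orb σ (S \ B))).card := by
        have := keygen (S \ B).card (S \ B) σ le_rfl (sdiff_inv hinv hBinv) 0
        convert this using 3 with P'
        · rw [Nat.one_ascFactorial]
        · push_cast; ring
      rw [← hIH, Finset.mul_sum]
      refine Finset.sum_congr rfl fun P' _ => ?_
      have hnm : B ∉ P'.parts := not_mem_parts ⟨a, haB⟩ P'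
      have hcond : (∀ T ∈ insert B P'.parts, ∀ i ∈ T, σ i ∈ T)
          ↔ ((∀ i ∈ B, σ i ∈ B) ∧ ∀ T ∈ P'.parts, ∀ i ∈ T, σ i ∈ T) :=
        Finset.forall_mem_insert _ _ _
      by_cases hcp : ∀ T ∈ P'.parts, ∀ i ∈ T, σ i ∈ T
      · rw [if_pos (hcond.2 ⟨hBinv, hcp⟩), if_pos hcp, Finset.card_insert_of_notMem hnm]
        have hle : P'.parts.card + 1 ≤ S.card := by
          have h1 := P'.card_parts_le_card
          have h2 : (S \ B).card = S.card - B.card := Finset.card_sdiff_of_subset hBs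
          have h3 : 1 ≤ B.card := Finset.card_pos.2 ⟨a, haB⟩
          have h4 : B.card ≤ S.card := Finset.card_le_card hBs
          omega
        rw [neg_one_pow_sub hle]
        simp only [Nat.add_sub_cancel]
        push_cast
        ring
      · rw [if_neg (fun h => hcp (hcond.1 h).2), if_neg hcp, mul_zero]
    · rw [if_neg hBinv]
      refine Finset.sum_eq_zero fun P' _ => ?_
      rw [if_neg]
      intro h
      exact hBinv (h B (Finset.mem_insert_self _ _))
  refine Eq.trans (Finset.sum_congr rfl hstep) ?_
  rw [← Finset.sum_filter, Finset.filter_filter, ← Finset.mul_sum,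
    invsum hinv ha (-1 : ℂ)]
  rw [show ((-1 : ℂ) + 1) = 0 by ring, zero_pow_eq]
  have hc1 : 1 ≤ (S.image (orb σ S)).card :=
    Finset.card_pos.2 (Finset.Nonempty.image ⟨a, ha⟩ _)
  by_cases hcyc : σ.IsCycleOn (S : Set (Fin m))
  · rw [if_pos hcyc]
    have hc := (isCycleOn_iff_card hinv ⟨a, ha⟩).1 hcyc
    rw [if_pos (by omega : (S.image (orb σ S)).card - 1 = 0)]
    rw [sign_of_isCycleOn hfix ⟨a, ha⟩ hcyc]
    ring
  · rw [if_neg hcyc]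
    have hc : (S.image (orb σ S)).card ≠ 1 :=
      fun h => hcyc ((isCycleOn_iff_card hinv ⟨a, ha⟩).2 h)
    rw [if_neg (by omega : ¬ ((S.image (orb σ S)).card - 1 = 0)), mul_zero]

lemma mem_iff_of_fix {σ : Perm (Fin m)} {T : Finset (Fin m)} (hfix : ∀ i ∉ T, σ i = i)
    (x : Fin m) : x ∈ T ↔ σ x ∈ T :=
  ⟨fun hx => fix_inv hfix x hx, fun hx => by
    by_contra h
    rw [hfix x h] at hx
    exact h hx⟩

lemma pminor_expand (A : Matrix (Fin m) (Fin m) ℂ) (T : Finset (Fin m)) :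
    pminor A T = ∑ σ ∈ Finset.univ.filter (fun σ : Perm (Fin m) => ∀ i ∉ T, σ i = i),
      ((Equiv.Perm.sign σ : ℤ) : ℂ) * ∏ i ∈ T, A i (σ i) := by
  rw [pminor, ← Matrix.det_transpose, Matrix.det_apply']
  refine Finset.sum_bij' (fun (π : Perm T) (_ : π ∈ Finset.univ) => Equiv.Perm.ofSubtype π)
    (fun σ hσ => σ.subtypePerm
      (fun x => (mem_iff_of_fix (by simpa using (Finset.mem_filter.1 hσ).2) x).symm)) ?_ ?_ ?_ ?_ ?_
  · intro π _
    refine Finset.mem_filter.2 ⟨Finset.mem_univ _, fun i hi => ?_⟩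
    exact Equiv.Perm.ofSubtype_apply_of_not_mem π hi
  · intro σ hσ
    exact Finset.mem_univ _
  · intro π _
    exact Equiv.Perm.subtypePerm_ofSubtype π
  · intro σ hσ
    have hfix : ∀ i ∉ T, σ i = i := by simpa using (Finset.mem_filter.1 hσ).2
    apply Equiv.ext
    intro x
    by_cases hx : x ∈ T
    · rw [Equiv.Perm.ofSubtype_apply_of_mem _ hx, Equiv.Perm.subtypePerm_apply]
    · rw [Equiv.Perm.ofSubtype_apply_of_not_mem _ hx, hfix x hx]
  · intro π _
    congr 1
    · rw [Equiv.Perm.sign_ofSubtype]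
    · rw [← Finset.prod_coe_sort T (fun i => A i (Equiv.Perm.ofSubtype π i))]
      refine Finset.prod_congr rfl fun x _ => ?_
      rw [Matrix.transpose_apply, Matrix.submatrix_apply]
      rw [Equiv.Perm.ofSubtype_apply_coe]

lemma prod_pminor (A : Matrix (Fin m) (Fin m) ℂ) (𝒯 : Finset (Finset (Fin m)))
    (hdisj : (↑𝒯 : Set (Finset (Fin m))).PairwiseDisjoint id) :
    ∏ T ∈ 𝒯, pminor A T
      = ∑ σ ∈ Finset.univ.filter (fun σ : Perm (Fin m) =>
          (∀ i ∉ 𝒯.sup id, σ i = i) ∧ ∀ T ∈ 𝒯, ∀ i ∈ T, σ i ∈ T),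
        ((Equiv.Perm.sign σ : ℤ) : ℂ) * ∏ i ∈ 𝒯.sup id, A i (σ i) := by
  revert hdisj
  induction 𝒯 using Finset.induction_on with
  | empty =>
    intro _
    have hfil : Finset.univ.filter (fun σ : Perm (Fin m) =>
        (∀ i ∉ (∅ : Finset (Finset (Fin m))).sup id, σ i = i) ∧
          ∀ T ∈ (∅ : Finset (Finset (Fin m))), ∀ i ∈ T, σ i ∈ T) = {1} := by
      ext σ
      simp only [Finset.mem_filter, Finset.mem_univ, true_and, Finset.sup_empty,
        Finset.notMem_empty, Finset.mem_singleton]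
      constructor
      · rintro ⟨h1, -⟩
        exact Equiv.ext fun i => h1 i (by simp)
      · rintro rfl
        exact ⟨fun i _ => rfl, fun T hT => absurd hT (by simp)⟩
    rw [hfil]
    simp
  | @insert T₀ 𝒯 hT₀ ih =>
    intro hdisj
    have hd' : (↑𝒯 : Set (Finset (Fin m))).PairwiseDisjoint id :=
      hdisj.subset (by rw [Finset.coe_insert]; exact Set.subset_insert _ _)
    have hdTU : Disjoint T₀ (𝒯.sup id) := by
      rw [Finset.disjoint_sup_right]
      intro T hT
      exact hdisj (by simp) (by simp [hT]) (fun h => hT₀ (h ▸ hT))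
    rw [Finset.prod_insert hT₀, pminor_expand, ih hd']
    rw [Finset.sum_mul_sum]
    set F₀ := Finset.univ.filter (fun σ : Perm (Fin m) => ∀ i ∉ T₀, σ i = i) with hF₀
    set U := 𝒯.sup id with hU
    set F₁ := Finset.univ.filter (fun σ : Perm (Fin m) =>
      (∀ i ∉ U, σ i = i) ∧ ∀ T ∈ 𝒯, ∀ i ∈ T, σ i ∈ T) with hF₁
    have hprod : (∑ σ₀ ∈ F₀, ∑ σ₁ ∈ F₁,
          (((Equiv.Perm.sign σ₀ : ℤ) : ℂ) * ∏ i ∈ T₀, A i (σ₀ i)) *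
            (((Equiv.Perm.sign σ₁ : ℤ) : ℂ) * ∏ i ∈ U, A i (σ₁ i)))
        = ∑ x ∈ F₀ ×ˢ F₁,
          (((Equiv.Perm.sign x.1 : ℤ) : ℂ) * ∏ i ∈ T₀, A i (x.1 i)) *
            (((Equiv.Perm.sign x.2 : ℤ) : ℂ) * ∏ i ∈ U, A i (x.2 i)) :=
      (Finset.sum_product' ..).symm
    refine Eq.trans hprod ?_
    have hsup : (insert T₀ 𝒯).sup id = T₀ ∪ U := by
      rw [Finset.sup_insert, Finset.sup_eq_union]
      rfl
    have hsupU : ∀ T ∈ 𝒯, T ⊆ U := fun T hT => Finset.le_sup (f := id) hT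
    have hdT : ∀ T ∈ 𝒯, Disjoint T₀ T := fun T hT =>
      hdisj (by simp) (by simp [hT]) (fun h => hT₀ (h ▸ hT))
    -- facts about elements of the target filter
    have htar : ∀ σ : Perm (Fin m), σ ∈ Finset.univ.filter (fun σ : Perm (Fin m) =>
          (∀ i ∉ (insert T₀ 𝒯).sup id, σ i = i) ∧ ∀ T ∈ insert T₀ 𝒯, ∀ i ∈ T, σ i ∈ T) →
        (∀ i, i ∉ T₀ ∪ U → σ i = i) ∧ (∀ T ∈ insert T₀ 𝒯, ∀ i ∈ T, σ i ∈ T) := by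
      intro σ hσ
      have h := (Finset.mem_filter.1 hσ).2
      exact ⟨fun i hi => h.1 i (by rwa [hsup]), h.2⟩
    have hiff1 : ∀ σ, σ ∈ Finset.univ.filter (fun σ : Perm (Fin m) =>
          (∀ i ∉ (insert T₀ 𝒯).sup id, σ i = i) ∧ ∀ T ∈ insert T₀ 𝒯, ∀ i ∈ T, σ i ∈ T) →
        ∀ x, x ∈ T₀ ↔ σ x ∈ T₀ := by
      intro σ hσ x
      obtain ⟨h1, h2⟩ := htar σ hσ
      constructor
      · exact fun hx => h2 T₀ (Finset.mem_insert_self _ _) x hx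
      · intro hx
        by_contra hxT₀
        by_cases hxU : x ∈ U
        · obtain ⟨T, hT, hxT⟩ := Finset.mem_sup.1 hxU
          have : σ x ∈ T := h2 T (Finset.mem_insert_of_mem hT) x hxT
          exact (Finset.disjoint_left.1 (hdT T hT)) hx this
        · rw [h1 x (by simp [hxT₀, hxU])] at hx
          exact hxT₀ hx
    have hiff2 : ∀ σ, σ ∈ Finset.univ.filter (fun σ : Perm (Fin m) =>
          (∀ i ∉ (insert T₀ 𝒯).sup id, σ i = i) ∧ ∀ T ∈ insert T₀ 𝒯, ∀ i ∈ T, σ i ∈ T) →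
        ∀ x, x ∈ U ↔ σ x ∈ U := by
      intro σ hσ x
      obtain ⟨h1, h2⟩ := htar σ hσ
      constructor
      · intro hx
        obtain ⟨T, hT, hxT⟩ := Finset.mem_sup.1 hx
        exact hsupU T hT (h2 T (Finset.mem_insert_of_mem hT) x hxT)
      · intro hx
        by_contra hxU
        by_cases hxT₀ : x ∈ T₀
        · have : σ x ∈ T₀ := h2 T₀ (Finset.mem_insert_self _ _) x hxT₀
          exact (Finset.disjoint_left.1 hdTU) this hx
        · rw [h1 x (by simp [hxT₀, hxU])] at hx
          exact hxU hx
    have hF₀fix : ∀ σ₀ ∈ F₀, ∀ i ∉ T₀, σ₀ i = i := by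
      intro σ₀ h
      simpa [hF₀] using h
    have hF₁p : ∀ σ₁ ∈ F₁, (∀ i ∉ U, σ₁ i = i) ∧ ∀ T ∈ 𝒯, ∀ i ∈ T, σ₁ i ∈ T := by
      intro σ₁ h
      simpa [hF₁] using h
    refine Finset.sum_bij' (fun x (_ : x ∈ F₀ ×ˢ F₁) => x.1 * x.2)
      (fun σ hσ => (Equiv.Perm.ofSubtype (σ.subtypePerm (fun x => (hiff1 σ hσ x).symm)),
        Equiv.Perm.ofSubtype (σ.subtypePerm (fun x => (hiff2 σ hσ x).symm)))) ?_ ?_ ?_ ?_ ?_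
    · -- forward membership
      rintro ⟨σ₀, σ₁⟩ hx
      obtain ⟨hx₀, hx₁⟩ := Finset.mem_product.1 hx
      have h₀fix := hF₀fix σ₀ hx₀
      obtain ⟨h₁fix, h₁comp⟩ := hF₁p σ₁ hx₁
      refine Finset.mem_filter.2 ⟨Finset.mem_univ _, ⟨?_, ?_⟩⟩
      · intro i hi
        rw [hsup] at hi
        rw [Equiv.Perm.mul_apply, h₁fix i (fun h => hi (Finset.mem_union_right _ h)),
          h₀fix i (fun h => hi (Finset.mem_union_left _ h))]
      · intro T hT i hiT
        rcases Finset.mem_insert.1 hT with rfl | hT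
        · have hiU : i ∉ U := Finset.disjoint_left.1 hdTU hiT
          rw [Equiv.Perm.mul_apply, h₁fix i hiU]
          exact fix_inv h₀fix i hiT
        · have h1 : σ₁ i ∈ T := h₁comp T hT i hiT
          have h2 : σ₁ i ∉ T₀ := fun h => (Finset.disjoint_left.1 (hdT T hT)) h h1
          rw [Equiv.Perm.mul_apply, h₀fix _ h2]
          exact h1
    · -- backward membership
      intro σ hσ
      obtain ⟨h1, h2⟩ := htar σ hσ
      refine Finset.mem_product.2 ⟨?_, ?_⟩
      · refine Finset.mem_filter.2 ⟨Finset.mem_univ _, fun i hi => ?_⟩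
        exact Equiv.Perm.ofSubtype_apply_of_not_mem _ hi
      · refine Finset.mem_filter.2 ⟨Finset.mem_univ _, ⟨fun i hi => ?_, ?_⟩⟩
        · exact Equiv.Perm.ofSubtype_apply_of_not_mem _ hi
        · intro T hT i hiT
          have hiU : i ∈ U := hsupU T hT hiT
          rw [Equiv.Perm.ofSubtype_apply_of_mem _ hiU, Equiv.Perm.subtypePerm_apply]
          exact h2 T (Finset.mem_insert_of_mem hT) i hiT
    · -- left inverse
      rintro ⟨σ₀, σ₁⟩ hx
      obtain ⟨hx₀, hx₁⟩ := Finset.mem_product.1 hx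
      have h₀fix := hF₀fix σ₀ hx₀
      obtain ⟨h₁fix, h₁comp⟩ := hF₁p σ₁ hx₁
      have hcomm : ∀ x ∉ U, σ₁ x = x := h₁fix
      refine Prod.ext ?_ ?_
      · apply Equiv.ext
        intro x
        by_cases hx' : x ∈ T₀
        · rw [Equiv.Perm.ofSubtype_apply_of_mem _ hx', Equiv.Perm.subtypePerm_apply]
          have hxU : x ∉ U := Finset.disjoint_left.1 hdTU hx'
          show (σ₀ * σ₁) x = σ₀ x
          rw [Equiv.Perm.mul_apply, h₁fix x hxU]
        · rw [Equiv.Perm.ofSubtype_apply_of_not_mem _ hx', h₀fix x hx']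
      · apply Equiv.ext
        intro x
        by_cases hx' : x ∈ U
        · rw [Equiv.Perm.ofSubtype_apply_of_mem _ hx', Equiv.Perm.subtypePerm_apply]
          show (σ₀ * σ₁) x = σ₁ x
          have hU1 : σ₁ x ∈ U := fix_inv h₁fix x hx'
          have hT1 : σ₁ x ∉ T₀ := Finset.disjoint_right.1 hdTU hU1
          rw [Equiv.Perm.mul_apply, h₀fix _ hT1]
        · rw [Equiv.Perm.ofSubtype_apply_of_not_mem _ hx', h₁fix x hx']
    · -- right inverse
      intro σ hσ
      obtain ⟨h1, h2⟩ := htar σ hσ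
      apply Equiv.ext
      intro x
      rw [Equiv.Perm.mul_apply]
      by_cases hxU : x ∈ U
      · rw [Equiv.Perm.ofSubtype_apply_of_mem _ hxU, Equiv.Perm.subtypePerm_apply]
        have hsU : σ x ∈ U := (hiff2 σ hσ x).1 hxU
        have hsT : σ x ∉ T₀ := Finset.disjoint_right.1 hdTU hsU
        rw [Equiv.Perm.ofSubtype_apply_of_not_mem _ hsT]
      · rw [Equiv.Perm.ofSubtype_apply_of_not_mem _ hxU]
        by_cases hxT : x ∈ T₀
        · rw [Equiv.Perm.ofSubtype_apply_of_mem _ hxT, Equiv.Perm.subtypePerm_apply]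
        · rw [Equiv.Perm.ofSubtype_apply_of_not_mem _ hxT, h1 x (by simp [hxT, hxU])]
    · -- values
      rintro ⟨σ₀, σ₁⟩ hx
      obtain ⟨hx₀, hx₁⟩ := Finset.mem_product.1 hx
      have h₀fix := hF₀fix σ₀ hx₀
      obtain ⟨h₁fix, h₁comp⟩ := hF₁p σ₁ hx₁
      have hsgn : ((Equiv.Perm.sign (σ₀ * σ₁) : ℤ) : ℂ)
          = ((Equiv.Perm.sign σ₀ : ℤ) : ℂ) * ((Equiv.Perm.sign σ₁ : ℤ) : ℂ) := by
        rw [map_mul]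
        push_cast
        ring
      have hprodsplit : ∏ i ∈ (insert T₀ 𝒯).sup id, A i ((σ₀ * σ₁) i)
          = (∏ i ∈ T₀, A i (σ₀ i)) * ∏ i ∈ U, A i (σ₁ i) := by
        rw [hsup, Finset.prod_union hdTU]
        congr 1
        · refine Finset.prod_congr rfl fun i hi => ?_
          have hiU : i ∉ U := Finset.disjoint_left.1 hdTU hi
          rw [Equiv.Perm.mul_apply, h₁fix i hiU]
        · refine Finset.prod_congr rfl fun i hi => ?_
          have hU1 : σ₁ i ∈ U := fix_inv h₁fix i hi
          have hT1 : σ₁ i ∉ T₀ := Finset.disjoint_right.1 hdTU hU1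
          rw [Equiv.Perm.mul_apply, h₀fix _ hT1]
      rw [hsgn, hprodsplit]
      ring

end Stmt9Aux


/-- Cycle-sums in terms of principal minors:
`C_S(A) = Σ_{set-partitions S₁⊔⋯⊔S_k of S} (-1)^(|S|-k) (k-1)! D_{S₁}(A)⋯D_{S_k}(A)`. -/
theorem stmt9 (n : ℕ) (A : Matrix (Fin n) (Fin n) ℂ) (S : Finset (Fin n))
    (hS : S.Nonempty) :
    cycleSum A S =
      ∑ P : Finpartition S,
        (-1 : ℂ) ^ (S.card - P.parts.card) * (Nat.factorial (P.parts.card - 1) : ℂ) *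
          ∏ T ∈ P.parts, pminor A T := by
  have hK : ∀ P : Finpartition S,
      (-1 : ℂ) ^ (S.card - P.parts.card) * (Nat.factorial (P.parts.card - 1) : ℂ) *
          ∏ T ∈ P.parts, pminor A T
      = ∑ σ ∈ Finset.univ.filter (fun σ : Equiv.Perm (Fin n) => ∀ i ∉ S, σ i = i),
          (if ∀ T ∈ P.parts, ∀ i ∈ T, σ i ∈ T then
            ((-1 : ℂ) ^ (S.card - P.parts.card) * (Nat.factorial (P.parts.card - 1) : ℂ))
              * (((Equiv.Perm.sign σ : ℤ) : ℂ) * ∏ i ∈ S, A i (σ i)) else 0) := by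
    intro P
    have hpp := Stmt9Aux.prod_pminor A P.parts (P.supIndep.pairwiseDisjoint)
    rw [P.sup_parts] at hpp
    rw [hpp, ← Finset.filter_filter, Finset.sum_filter, Finset.mul_sum]
    refine Finset.sum_congr rfl fun σ _ => ?_
    split_ifs <;> simp
  have h1 : (∑ P : Finpartition S,
        (-1 : ℂ) ^ (S.card - P.parts.card) * (Nat.factorial (P.parts.card - 1) : ℂ) *
          ∏ T ∈ P.parts, pminor A T)
      = ∑ σ ∈ Finset.univ.filter (fun σ : Equiv.Perm (Fin n) => ∀ i ∉ S, σ i = i),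
          ∑ P : Finpartition S,
          (if ∀ T ∈ P.parts, ∀ i ∈ T, σ i ∈ T then
            ((-1 : ℂ) ^ (S.card - P.parts.card) * (Nat.factorial (P.parts.card - 1) : ℂ))
              * (((Equiv.Perm.sign σ : ℤ) : ℂ) * ∏ i ∈ S, A i (σ i)) else 0) := by
    rw [Finset.sum_congr rfl fun P _ => hK P]
    exact Finset.sum_comm
  rw [h1]
  have h2 : ∀ σ ∈ Finset.univ.filter (fun σ : Equiv.Perm (Fin n) => ∀ i ∉ S, σ i = i),
      (∑ P : Finpartition S,
        (if ∀ T ∈ P.parts, ∀ i ∈ T, σ i ∈ T then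
          ((-1 : ℂ) ^ (S.card - P.parts.card) * (Nat.factorial (P.parts.card - 1) : ℂ))
            * (((Equiv.Perm.sign σ : ℤ) : ℂ) * ∏ i ∈ S, A i (σ i)) else 0))
      = (if σ.IsCycleOn (S : Set (Fin n)) then
          ((Equiv.Perm.sign σ : ℤ) : ℂ) else 0) * (((Equiv.Perm.sign σ : ℤ) : ℂ)
            * ∏ i ∈ S, A i (σ i)) := by
    intro σ hσ
    have hfix : ∀ i ∉ S, σ i = i := (Finset.mem_filter.1 hσ).2
    rw [← Stmt9Aux.key hfix hS, Finset.sum_mul]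
    refine Finset.sum_congr rfl fun P _ => ?_
    split_ifs <;> simp
  rw [Finset.sum_congr rfl h2]
  have h3 : ∀ σ : Equiv.Perm (Fin n),
      (if σ.IsCycleOn (S : Set (Fin n)) then ((Equiv.Perm.sign σ : ℤ) : ℂ) else 0)
          * (((Equiv.Perm.sign σ : ℤ) : ℂ) * ∏ i ∈ S, A i (σ i))
      = if σ.IsCycleOn (S : Set (Fin n)) then (∏ i ∈ S, A i (σ i)) else 0 := by
    intro σ
    have hsq : ((Equiv.Perm.sign σ : ℤ) : ℂ) * ((Equiv.Perm.sign σ : ℤ) : ℂ) = 1 := by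
      have := Int.units_mul_self (Equiv.Perm.sign σ)
      have h4 : ((Equiv.Perm.sign σ * Equiv.Perm.sign σ : ℤˣ) : ℤ) = ((1 : ℤˣ) : ℤ) := by
        rw [this]
      rw [Units.val_mul] at h4
      have h5 : (((Equiv.Perm.sign σ : ℤ) * (Equiv.Perm.sign σ : ℤ) : ℤ) : ℂ) = ((1 : ℤ) : ℂ) := by
        rw [h4]; simp
      push_cast at h5
      exact h5
    split_ifs
    · rw [← mul_assoc, hsq, one_mul]
    · ring
  rw [Finset.sum_congr rfl fun σ _ => h3 σ]
  rw [← Finset.sum_filter, Finset.filter_filter, cycleSum]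
  apply Finset.sum_congr _ (fun σ _ => rfl)
  ext σ
  simp only [Finset.mem_filter, Finset.mem_univ, true_and]
  exact and_comm
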